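/- Let d₁, d₂ be positive integers with d₁ ∣ d₂, set n := d₁·d₂, and in M = (ZMod n)⁴ let G be the subgroup generated by d₁·e₁' and d₂·e₂'. Then: (i) G is isotropic with respect to the standard symplectic form ω; (ii) G has cardinality n; (iii) G^⊥ is the subgroup generated by e₁', d₂·f₁', e₂' and d₁·f₂', and G^⊥/G is isomorphic as an abelian group to ZMod d₁ × ZMod d₁ × ZMod d₂ × ZMod d₂; (iv) if moreover d₂ is even, then every coset of G contains at most two of the six Weierstrass 2-torsion elements e₁, f₁, e₁+f₁, e₂, f₂, e₂+f₂. -/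

import Mathlib

/-- The group `A[n]` of `n`-torsion points of a principally polarized abelian surface,
modelled as `(ZMod n)⁴`, with coordinates ordered `(e₁', e₂', f₁', f₂')`. -/
abbrev M (n : ℕ) : Type := ZMod n × ZMod n × ZMod n × ZMod n

/-- The standard generator `e₁'`. -/
def e₁' (n : ℕ) : M n := (1, 0, 0, 0)
/-- The standard generator `e₂'`. -/
def e₂' (n : ℕ) : M n := (0, 1, 0, 0)
/-- The standard generator `f₁'`. -/
def f₁' (n : ℕ) : M n := (0, 0, 1, 0)
/-- The standard generator `f₂'`. -/
def f₂' (n : ℕ) : M n := (0, 0, 0, 1)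

/-- The standard symplectic form on `(ZMod n)⁴`: the biadditive alternating form with
`ω(e₁',f₁') = ω(e₂',f₂') = 1` and vanishing on the other pairs of standard generators. -/
def sympForm (n : ℕ) (x y : M n) : ZMod n :=
  x.1 * y.2.2.1 + x.2.1 * y.2.2.2 - x.2.2.1 * y.1 - x.2.2.2 * y.2.1

/-- A subgroup `G` is isotropic if the symplectic form vanishes identically on `G × G`. -/
def IsIsotropic (n : ℕ) (G : AddSubgroup (M n)) : Prop :=
  ∀ g ∈ G, ∀ h ∈ G, sympForm n g h = 0

lemma sympForm_add_left (n : ℕ) (a b g : M n) :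
    sympForm n (a + b) g = sympForm n a g + sympForm n b g := by
  simp only [sympForm, Prod.fst_add, Prod.snd_add]; ring

lemma sympForm_neg_left (n : ℕ) (a g : M n) :
    sympForm n (-a) g = -sympForm n a g := by
  simp only [sympForm, Prod.fst_neg, Prod.snd_neg]; ring

/-- The orthogonal complement `G^⊥` of a subgroup `G` with respect to the symplectic form. -/
def perp (n : ℕ) (G : AddSubgroup (M n)) : AddSubgroup (M n) where
  carrier := {x | ∀ g ∈ G, sympForm n x g = 0}
  zero_mem' := by intro g _; simp [sympForm]
  add_mem' := by
    intro a b ha hb g hg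
    rw [sympForm_add_left, ha g hg, hb g hg, add_zero]
  neg_mem' := by
    intro a ha g hg
    rw [sympForm_neg_left, ha g hg, neg_zero]

/-- The six Weierstrass 2-torsion elements `e₁, f₁, e₁+f₁, e₂, f₂, e₂+f₂`,
where `e₁ = (n/2)·e₁'`, etc. -/
def weierstrassSet (n : ℕ) : Set (M n) :=
  {(n / 2) • e₁' n, (n / 2) • f₁' n, (n / 2) • e₁' n + (n / 2) • f₁' n,
   (n / 2) • e₂' n, (n / 2) • f₂' n, (n / 2) • e₂' n + (n / 2) • f₂' n}

open AddSubgroup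

lemma mem_zmultiples_natCast_iff {n d : ℕ} (hd : d ∣ n) (a : ℤ) :
    ((a : ZMod n)) ∈ AddSubgroup.zmultiples ((d : ZMod n)) ↔ (d : ℤ) ∣ a := by
  constructor
  · rintro ⟨k, hk⟩
    simp only [zsmul_eq_mul] at hk
    have h0 : ((k * d - a : ℤ) : ZMod n) = 0 := by
      push_cast
      rw [sub_eq_zero]
      exact hk
    rw [ZMod.intCast_zmod_eq_zero_iff_dvd] at h0
    have hdn : (d : ℤ) ∣ (n : ℤ) := Int.natCast_dvd_natCast.2 hd
    have h2 := hdn.trans h0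
    have h3 : (d : ℤ) ∣ k * d := ⟨k, mul_comm _ _⟩
    simpa using dvd_sub h3 h2
  · rintro ⟨k, rfl⟩
    refine ⟨k, ?_⟩
    simp only [zsmul_eq_mul]
    push_cast
    ring

lemma mul_cast_eq_zero_iff {n : ℕ} {d e : ℕ} (h : n = d * e) (hd : d ≠ 0) (u : ZMod n) :
    u * (d : ZMod n) = 0 ↔ u ∈ AddSubgroup.zmultiples ((e : ZMod n)) := by
  obtain ⟨a, rfl⟩ := ZMod.intCast_surjective u
  rw [mem_zmultiples_natCast_iff (h ▸ Dvd.intro_left d rfl) a]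
  have h1 : ((a : ZMod n)) * (d : ZMod n) = ((a * d : ℤ) : ZMod n) := by push_cast; ring
  rw [h1, ZMod.intCast_zmod_eq_zero_iff_dvd, h]
  push_cast
  rw [show (a * d : ℤ) = d * a by ring]
  constructor
  · intro hh
    exact (mul_dvd_mul_iff_left (by exact_mod_cast hd : (d:ℤ) ≠ 0)).1 hh
  · intro hh
    exact mul_dvd_mul_left _ hh

lemma weier_pair {n : ℕ} (hm : ((n/2 : ℕ) : ZMod n) ≠ 0)
    (h2m : ((n/2 : ℕ) : ZMod n) + ((n/2 : ℕ) : ZMod n) = 0)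
    {u v : M n} (hu : u ∈ weierstrassSet n) (hv : v ∈ weierstrassSet n)
    (h3 : u.2.2.1 = v.2.2.1) (h4 : u.2.2.2 = v.2.2.2) (huv : u ≠ v) :
    u + v = (((n/2:ℕ) : ZMod n) - u.2.2.2, ((n/2:ℕ):ZMod n) - u.2.2.1,
             u.2.2.1 + u.2.2.1, u.2.2.2 + u.2.2.2) := by
  simp only [weierstrassSet, e₁', e₂', f₁', f₂', Prod.smul_mk, Prod.mk_add_mk, smul_zero,
    nsmul_eq_mul, mul_one, add_zero, zero_add, Set.mem_insert_iff,
    Set.mem_singleton_iff] at hu hv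
  rcases hu with rfl|rfl|rfl|rfl|rfl|rfl <;> rcases hv with rfl|rfl|rfl|rfl|rfl|rfl <;>
    simp_all [Prod.mk_add_mk, Prod.mk.injEq, sub_zero, sub_self, eq_comm]

section Aux

variable (d₁ d₂ : ℕ)

def Sgrp : AddSubgroup (M (d₁ * d₂)) :=
  (zmultiples ((d₁ : ZMod (d₁ * d₂)))).prod
    ((zmultiples ((d₂ : ZMod (d₁ * d₂)))).prod
      ((⊥ : AddSubgroup (ZMod (d₁ * d₂))).prod ⊥))

def Pgrp : AddSubgroup (M (d₁ * d₂)) :=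
  (⊤ : AddSubgroup (ZMod (d₁ * d₂))).prod
    ((⊤ : AddSubgroup (ZMod (d₁ * d₂))).prod
      ((zmultiples ((d₂ : ZMod (d₁ * d₂)))).prod (zmultiples ((d₁ : ZMod (d₁ * d₂))))))

lemma mem_Sgrp (v : M (d₁ * d₂)) :
    v ∈ Sgrp d₁ d₂ ↔ v.1 ∈ zmultiples ((d₁ : ZMod (d₁ * d₂))) ∧
      v.2.1 ∈ zmultiples ((d₂ : ZMod (d₁ * d₂))) ∧ v.2.2.1 = 0 ∧ v.2.2.2 = 0 := by
  simp [Sgrp, AddSubgroup.mem_prod, AddSubgroup.mem_bot, Prod.ext_iff]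

lemma mem_Pgrp (v : M (d₁ * d₂)) :
    v ∈ Pgrp d₁ d₂ ↔ v.2.2.1 ∈ zmultiples ((d₂ : ZMod (d₁ * d₂))) ∧
      v.2.2.2 ∈ zmultiples ((d₁ : ZMod (d₁ * d₂))) := by
  simp [Pgrp, AddSubgroup.mem_prod]

lemma closure_eq_Sgrp :
    AddSubgroup.closure {d₁ • e₁' (d₁ * d₂), d₂ • e₂' (d₁ * d₂)} = Sgrp d₁ d₂ := by
  apply le_antisymm
  · rw [AddSubgroup.closure_le]
    rintro v hv
    simp only [Set.mem_insert_iff, Set.mem_singleton_iff] at hv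
    rcases hv with rfl | rfl <;>
      · rw [SetLike.mem_coe, mem_Sgrp]
        refine ⟨?_, ?_, ?_, ?_⟩ <;>
          simp [e₁', e₂', nsmul_eq_mul, AddSubgroup.mem_zmultiples, zero_mem]
  · rintro ⟨v1, v2, v3, v4⟩ hv
    rw [mem_Sgrp] at hv
    obtain ⟨⟨k, hk⟩, ⟨l, hl⟩, h3, h4⟩ := hv
    simp only at h3 h4 hk hl
    have key : (v1, v2, v3, v4) = k • (d₁ • e₁' (d₁*d₂)) + l • (d₂ • e₂' (d₁*d₂)) := by
      subst h3 h4
      simp only [e₁', e₂', Prod.smul_mk, Prod.mk_add_mk, smul_zero, add_zero, zero_add,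
        Prod.mk.injEq]
      refine ⟨?_, ?_, trivial⟩
      · rw [← hk]; simp [nsmul_eq_mul]
      · rw [← hl]; simp [nsmul_eq_mul]
    rw [key]
    exact add_mem (zsmul_mem (subset_closure (by simp)) k)
      (zsmul_mem (subset_closure (by simp)) l)

lemma perp_closure_eq (hd₁ : d₁ ≠ 0) (hd₂ : d₂ ≠ 0) :
    perp (d₁ * d₂) (AddSubgroup.closure {d₁ • e₁' (d₁ * d₂), d₂ • e₂' (d₁ * d₂)})
      = Pgrp d₁ d₂ := by
  ext x
  constructor
  · intro hx
    have h1 := hx (d₁ • e₁' _) (subset_closure (by simp))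
    have h2 := hx (d₂ • e₂' _) (subset_closure (by simp))
    simp only [sympForm, e₁', e₂', Prod.smul_mk, nsmul_eq_mul, mul_one, mul_zero, smul_zero,
      add_zero, zero_add, zero_sub, sub_zero] at h1 h2
    rw [mem_Pgrp]
    constructor
    · rw [← mul_cast_eq_zero_iff rfl hd₁ x.2.2.1]
      linear_combination -h1
    · rw [← mul_cast_eq_zero_iff (mul_comm d₁ d₂) hd₂ x.2.2.2]
      linear_combination -h2
  · intro hx g hg
    rw [mem_Pgrp] at hx
    rw [closure_eq_Sgrp, mem_Sgrp] at hg
    obtain ⟨⟨k, hk⟩, ⟨l, hl⟩, h3, h4⟩ := hg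
    have e1 : x.2.2.1 * (d₁ : ZMod (d₁*d₂)) = 0 := (mul_cast_eq_zero_iff rfl hd₁ _).2 hx.1
    have e2 : x.2.2.2 * (d₂ : ZMod (d₁*d₂)) = 0 :=
      (mul_cast_eq_zero_iff (mul_comm d₁ d₂) hd₂ _).2 hx.2
    simp only [zsmul_eq_mul] at hk hl
    simp only [sympForm, h3, h4, mul_zero, ← hk, ← hl, zero_add, add_zero, zero_sub, sub_zero]
    linear_combination (-(k : ZMod (d₁*d₂))) * e1 - (l : ZMod (d₁*d₂)) * e2

lemma closure_four_eq_Pgrp [NeZero (d₁ * d₂)] :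
    AddSubgroup.closure {e₁' (d₁*d₂), d₂ • f₁' (d₁*d₂), e₂' (d₁*d₂), d₁ • f₂' (d₁*d₂)}
      = Pgrp d₁ d₂ := by
  apply le_antisymm
  · rw [AddSubgroup.closure_le]
    rintro v hv
    simp only [Set.mem_insert_iff, Set.mem_singleton_iff] at hv
    rcases hv with rfl | rfl | rfl | rfl <;>
      · rw [SetLike.mem_coe, mem_Pgrp]
        constructor <;>
          simp [e₁', e₂', f₁', f₂', nsmul_eq_mul, AddSubgroup.mem_zmultiples, zero_mem]
  · rintro ⟨v1, v2, v3, v4⟩ hv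
    rw [mem_Pgrp] at hv
    obtain ⟨⟨k, hk⟩, ⟨l, hl⟩⟩ := hv
    simp only [zsmul_eq_mul] at hk hl
    have key : (v1, v2, v3, v4) = (v1.val) • e₁' (d₁*d₂) + (v2.val) • e₂' (d₁*d₂)
        + k • (d₂ • f₁' (d₁*d₂)) + l • (d₁ • f₂' (d₁*d₂)) := by
      simp only [e₁', e₂', f₁', f₂', Prod.smul_mk, Prod.mk_add_mk, smul_zero, add_zero, zero_add,
        Prod.mk.injEq, nsmul_eq_mul, zsmul_eq_mul, mul_one]
      refine ⟨?_, ?_, ?_, ?_⟩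
      · simp [ZMod.natCast_val, ZMod.cast_id]
      · simp [ZMod.natCast_val, ZMod.cast_id]
      · rw [← hk]
      · rw [← hl]
    rw [key]
    refine add_mem (add_mem (add_mem ?_ ?_) ?_) ?_
    · exact nsmul_mem (subset_closure (by simp)) _
    · exact nsmul_mem (subset_closure (by simp)) _
    · exact zsmul_mem (subset_closure (by simp)) _
    · exact zsmul_mem (subset_closure (by simp)) _

def rho0 : (ℤ × ℤ × ℤ × ℤ) →+ M (d₁ * d₂) where
  toFun p := ((p.1 : ZMod (d₁*d₂)), (p.2.2.1 : ZMod (d₁*d₂)),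
              ((p.2.1 * d₂ : ℤ) : ZMod (d₁*d₂)), ((p.2.2.2 * d₁ : ℤ) : ZMod (d₁*d₂)))
  map_zero' := by simp
  map_add' p q := by
    simp only [Prod.fst_add, Prod.snd_add, Prod.mk_add_mk, Prod.mk.injEq]
    refine ⟨?_, ?_, ?_, ?_⟩ <;> push_cast <;> ring

def sigma0 : (ℤ × ℤ × ℤ × ℤ) →+ (ZMod d₁ × ZMod d₁ × ZMod d₂ × ZMod d₂) :=
  (Int.castAddHom (ZMod d₁)).prodMap ((Int.castAddHom (ZMod d₁)).prodMap
    ((Int.castAddHom (ZMod d₂)).prodMap (Int.castAddHom (ZMod d₂))))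

end Aux


/-- the subgroup `G = ⟨d₁·e₁', d₂·e₂'⟩` of `(ZMod (d₁d₂))⁴` is isotropic
of cardinality `d₁d₂`, has orthogonal complement `⟨e₁', d₂·f₁', e₂', d₁·f₂'⟩` with
`G^⊥/G ≅ (ZMod d₁)² × (ZMod d₂)²`, and (if `d₂` is even) every coset of `G` contains at
most two of the six Weierstrass 2-torsion elements. -/
theorem stmt_12 (d₁ d₂ : ℕ) (hd₁ : 0 < d₁) (hd₂ : 0 < d₂) (hdvd : d₁ ∣ d₂)
    (G : AddSubgroup (M (d₁ * d₂)))
    (hG : G = AddSubgroup.closure {d₁ • e₁' (d₁ * d₂), d₂ • e₂' (d₁ * d₂)}) :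
    IsIsotropic (d₁ * d₂) G ∧
    Nat.card G = d₁ * d₂ ∧
    perp (d₁ * d₂) G = AddSubgroup.closure
      {e₁' (d₁ * d₂), d₂ • f₁' (d₁ * d₂), e₂' (d₁ * d₂), d₁ • f₂' (d₁ * d₂)} ∧
    Nonempty
      ((perp (d₁ * d₂) G ⧸ G.addSubgroupOf (perp (d₁ * d₂) G)) ≃+
        (ZMod d₁ × ZMod d₁ × ZMod d₂ × ZMod d₂)) ∧
    (2 ∣ d₂ →
      ∀ x ∈ weierstrassSet (d₁ * d₂), ∀ y ∈ weierstrassSet (d₁ * d₂),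
        ∀ z ∈ weierstrassSet (d₁ * d₂),
          x ≠ y → x ≠ z → y ≠ z → ¬(x - y ∈ G ∧ x - z ∈ G)) := by
  have hn0 : d₁ * d₂ ≠ 0 := by positivity
  haveI : NeZero (d₁ * d₂) := ⟨hn0⟩
  haveI : NeZero d₁ := ⟨hd₁.ne'⟩
  haveI : NeZero d₂ := ⟨hd₂.ne'⟩
  subst hG
  refine ⟨?_, ?_, ?_, ?_, ?_⟩
  · -- isotropic
    intro g hg h hh
    rw [closure_eq_Sgrp, mem_Sgrp] at hg hh
    obtain ⟨-, -, hg3, hg4⟩ := hg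
    obtain ⟨-, -, hh3, hh4⟩ := hh
    simp [sympForm, hg3, hg4, hh3, hh4]
  · -- cardinality
    rw [closure_eq_Sgrp, Sgrp,
      Nat.card_congr (AddSubgroup.prodEquiv _ _).toEquiv, Nat.card_prod,
      Nat.card_congr (AddSubgroup.prodEquiv _ _).toEquiv, Nat.card_prod,
      Nat.card_congr (AddSubgroup.prodEquiv _ _).toEquiv, Nat.card_prod,
      Nat.card_zmultiples, Nat.card_zmultiples, AddSubgroup.card_bot,
      ZMod.addOrderOf_coe _ hn0, ZMod.addOrderOf_coe _ hn0,
      Nat.gcd_eq_right ⟨d₂, rfl⟩, Nat.gcd_eq_right ⟨d₁, mul_comm _ _⟩,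
      Nat.mul_div_cancel_left _ hd₁, Nat.mul_div_cancel _ hd₂]
    ring
  · -- perp description
    rw [perp_closure_eq d₁ d₂ hd₁.ne' hd₂.ne', closure_four_eq_Pgrp d₁ d₂]
  · -- quotient iso
    have hmem : ∀ p, rho0 d₁ d₂ p ∈
        perp (d₁*d₂) (AddSubgroup.closure {d₁ • e₁' (d₁ * d₂), d₂ • e₂' (d₁ * d₂)}) := by
      intro p
      rw [perp_closure_eq d₁ d₂ hd₁.ne' hd₂.ne', mem_Pgrp]
      constructor
      · refine ⟨p.2.1, ?_⟩
        show p.2.1 • ((d₂ : ZMod (d₁*d₂))) = ((p.2.1 * d₂ : ℤ) : ZMod (d₁*d₂))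
        rw [zsmul_eq_mul]; push_cast; ring
      · refine ⟨p.2.2.2, ?_⟩
        show p.2.2.2 • ((d₁ : ZMod (d₁*d₂))) = ((p.2.2.2 * d₁ : ℤ) : ZMod (d₁*d₂))
        rw [zsmul_eq_mul]; push_cast; ring
    set Pp := perp (d₁*d₂) (AddSubgroup.closure {d₁ • e₁' (d₁ * d₂), d₂ • e₂' (d₁ * d₂)})
      with hPp
    let ρ : (ℤ × ℤ × ℤ × ℤ) →+ Pp := (rho0 d₁ d₂).codRestrict Pp hmem
    have hρ : Function.Surjective ρ := by
      rintro ⟨⟨x1, x2, x3, x4⟩, hx⟩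
      rw [hPp, perp_closure_eq d₁ d₂ hd₁.ne' hd₂.ne', mem_Pgrp] at hx
      obtain ⟨⟨k, hk⟩, ⟨l, hl⟩⟩ := hx
      simp only [zsmul_eq_mul] at hk hl
      refine ⟨((x1.val : ℤ), k, (x2.val : ℤ), l), ?_⟩
      apply Subtype.ext
      show rho0 d₁ d₂ _ = _
      simp only [rho0, AddMonoidHom.coe_mk, ZeroHom.coe_mk, Prod.mk.injEq]
      refine ⟨?_, ?_, ?_, ?_⟩
      · push_cast; simp [ZMod.natCast_val, ZMod.cast_id]
      · push_cast; simp [ZMod.natCast_val, ZMod.cast_id]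
      · rw [← hk]; push_cast; ring
      · rw [← hl]; push_cast; ring
    let Gsub := (AddSubgroup.closure
      {d₁ • e₁' (d₁ * d₂), d₂ • e₂' (d₁ * d₂)}).addSubgroupOf Pp
    let π : (ℤ × ℤ × ℤ × ℤ) →+ (Pp ⧸ Gsub) := (QuotientAddGroup.mk' Gsub).comp ρ
    have hπ : Function.Surjective π :=
      (QuotientAddGroup.mk'_surjective Gsub).comp hρ
    have hσ : Function.Surjective (sigma0 d₁ d₂) := by
      rw [sigma0, AddMonoidHom.coe_prodMap, AddMonoidHom.coe_prodMap,
        AddMonoidHom.coe_prodMap]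
      exact ZMod.intCast_surjective.prodMap (ZMod.intCast_surjective.prodMap
        (ZMod.intCast_surjective.prodMap ZMod.intCast_surjective))
    have hker : π.ker = (sigma0 d₁ d₂).ker := by
      ext p
      obtain ⟨a, b, c, d⟩ := p
      simp only [π, AddMonoidHom.mem_ker, AddMonoidHom.coe_comp, Function.comp_apply,
        QuotientAddGroup.mk'_apply, QuotientAddGroup.eq_zero_iff]
      rw [show ρ (a, b, c, d) ∈ Gsub ↔
        ((ρ (a, b, c, d) : M (d₁*d₂)) ∈ AddSubgroup.closure
          {d₁ • e₁' (d₁ * d₂), d₂ • e₂' (d₁ * d₂)}) from Iff.rfl]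
      rw [show ((ρ (a, b, c, d) : M (d₁*d₂))) = rho0 d₁ d₂ (a, b, c, d) from rfl]
      rw [closure_eq_Sgrp, mem_Sgrp]
      simp only [rho0, AddMonoidHom.coe_mk, ZeroHom.coe_mk]
      rw [mem_zmultiples_natCast_iff ⟨d₂, rfl⟩ a,
        mem_zmultiples_natCast_iff ⟨d₁, mul_comm _ _⟩ c,
        ZMod.intCast_zmod_eq_zero_iff_dvd, ZMod.intCast_zmod_eq_zero_iff_dvd]
      rw [show ((d₁*d₂ : ℕ) : ℤ) = (d₁ : ℤ) * (d₂ : ℤ) by push_cast; ring]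
      rw [mul_dvd_mul_iff_right (by exact_mod_cast hd₂.ne' : (d₂ : ℤ) ≠ 0)]
      rw [show (d₁ : ℤ) * (d₂ : ℤ) ∣ d * d₁ ↔ (d₂ : ℤ) ∣ d by
        rw [show (d₁ : ℤ) * d₂ = d₂ * d₁ by ring]
        exact mul_dvd_mul_iff_right (by exact_mod_cast hd₁.ne' : (d₁ : ℤ) ≠ 0)]
      simp only [sigma0, AddMonoidHom.coe_prodMap, Prod.map_apply,
        Int.coe_castAddHom, Prod.mk_eq_zero,
        ZMod.intCast_zmod_eq_zero_iff_dvd]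
      tauto
    exact ⟨(QuotientAddGroup.quotientKerEquivOfSurjective π hπ).symm.trans
      ((QuotientAddGroup.quotientAddEquivOfEq hker).trans
        (QuotientAddGroup.quotientKerEquivOfSurjective _ hσ))⟩
  · -- Weierstrass
    intro h2 x hx y hy z hz hxy hxz hyz hmem
    obtain ⟨hxyG, hxzG⟩ := hmem
    have hm : ((d₁ * d₂ / 2 : ℕ) : ZMod (d₁*d₂)) ≠ 0 := by
      rw [Ne, ZMod.natCast_eq_zero_iff]
      intro hdvd'
      have h2n : 2 ∣ d₁ * d₂ := h2.mul_left d₁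
      have hlt : d₁ * d₂ / 2 < d₁ * d₂ := Nat.div_lt_self (by positivity) one_lt_two
      have hpos : 0 < d₁ * d₂ / 2 :=
        Nat.div_pos (Nat.le_of_dvd (by positivity) h2n) two_pos
      have := Nat.le_of_dvd hpos hdvd'
      omega
    have h2m : ((d₁*d₂/2 : ℕ) : ZMod (d₁*d₂)) + ((d₁*d₂/2 : ℕ) : ZMod (d₁*d₂)) = 0 := by
      have h2n : 2 ∣ d₁ * d₂ := h2.mul_left d₁
      rw [← Nat.cast_add]
      rw [show d₁*d₂/2 + d₁*d₂/2 = d₁*d₂ by omega]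
      exact ZMod.natCast_self _
    rw [closure_eq_Sgrp, mem_Sgrp] at hxyG hxzG
    obtain ⟨-, -, hxy3, hxy4⟩ := hxyG
    obtain ⟨-, -, hxz3, hxz4⟩ := hxzG
    simp only [Prod.fst_sub, Prod.snd_sub, sub_eq_zero] at hxy3 hxy4 hxz3 hxz4
    have hy' := weier_pair hm h2m hx hy hxy3 hxy4 hxy
    have hz' := weier_pair hm h2m hx hz hxz3 hxz4 hxz
    exact hyz (add_left_cancel (hy'.trans hz'.symm))
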